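/- Let A, B, C be affinely independent points of the Euclidean plane with dist A B ≤ dist B C ≤ dist A C, and let D be a point of the segment [B, C] with dist B D = dist A B. Then the circumradius of the triangle A B D is at most the circumradius of the triangle A B C, and the inradius of the triangle A B D is at most the inradius of the triangle A B C; here the inradius of a nondegenerate triangle is its area divided by its semiperimeter, i.e. the inradius of A B C equals Area(A,B,C) / ((dist A B + dist B C + dist C A)/2). -/

import Mathlib

open MeasureTheory

/-- The area of the triangle with vertices `A`, `B`, `C`: the 2-dimensional Lebesgue measure
of the convex hull of `{A, B, C}`. -/
noncomputable def triangleArea (A B C : EuclideanSpace ℝ (Fin 2)) : ℝ :=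
  (volume (convexHull ℝ ({A, B, C} : Set (EuclideanSpace ℝ (Fin 2))))).toReal

/-- The circumradius of the triangle `A B C`, via the formula
`R = (dist A B · dist B C · dist C A) / (4 · Area)`. -/
noncomputable def triangleCircumradius (A B C : EuclideanSpace ℝ (Fin 2)) : ℝ :=
  (dist A B * dist B C * dist C A) / (4 * triangleArea A B C)

/-- The inradius of the triangle `A B C`: its area divided by its semiperimeter. -/
noncomputable def triangleInradius (A B C : EuclideanSpace ℝ (Fin 2)) : ℝ :=
  triangleArea A B C / ((dist A B + dist B C + dist C A) / 2)

abbrev E2 := EuclideanSpace ℝ (Fin 2)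

lemma range_triple (A B C : E2) : Set.range ![A, B, C] = {A, B, C} := by
  ext x; simp [Matrix.range_cons, Matrix.range_empty]; tauto

lemma triangleArea_pos (A B C : E2) (hind : AffineIndependent ℝ ![A, B, C]) :
    0 < triangleArea A B C := by
  have htop : affineSpan ℝ ({A, B, C} : Set E2) = ⊤ := by
    rw [← range_triple A B C]
    rw [hind.affineSpan_eq_top_iff_card_eq_finrank_add_one]
    simp [finrank_euclideanSpace_fin]
  have hne : (interior (convexHull ℝ ({A, B, C} : Set E2))).Nonempty :=
    interior_convexHull_nonempty_iff_affineSpan_eq_top.mpr htop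
  have hpos : 0 < volume (convexHull ℝ ({A, B, C} : Set E2)) :=
    Measure.measure_pos_of_nonempty_interior _ hne
  have hfin : volume (convexHull ℝ ({A, B, C} : Set E2)) < ⊤ :=
    ((Set.finite_singleton C).insert B |>.insert A).isCompact_convexHull ℝ |>.measure_lt_top
  exact ENNReal.toReal_pos hpos.ne' hfin.ne

lemma triangleArea_scale (A B C : E2) (hind : AffineIndependent ℝ ![A, B, C])
    (v : ℝ) (hv : 0 ≤ v) :
    triangleArea A B ((1 - v) • B + v • C) = v * triangleArea A B C := by
  -- linear independence of B - A, C - A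
  have hli0 := (affineIndependent_iff_linearIndependent_vsub ℝ ![A, B, C] 0).mp hind
  have g : Fin 2 → {x : Fin 3 // x ≠ (0 : Fin 3)} := fun i => ⟨i.succ, Fin.succ_ne_zero i⟩
  have hginj : Function.Injective (fun i : Fin 2 => (⟨i.succ, Fin.succ_ne_zero i⟩ : {x : Fin 3 // x ≠ (0 : Fin 3)})) := by
    intro i j h
    exact Fin.succ_injective _ (congrArg Subtype.val h)
  have hli1 := hli0.comp _ hginj
  have hli1' : LinearIndependent ℝ ![B - A, C - A] := by
    convert hli1 using 1
    funext i
    fin_cases i <;> simp [vsub_eq_sub]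
    rfl
  have hcard : Fintype.card (Fin 2) = Module.finrank ℝ E2 := by
    simp [finrank_euclideanSpace_fin]
  let bb : Module.Basis (Fin 2) ℝ E2 := basisOfLinearIndependentOfCardEqFinrank hli1' hcard
  have hbb : ⇑bb = ![B - A, C - A] := coe_basisOfLinearIndependentOfCardEqFinrank hli1' hcard
  set L : E2 →ₗ[ℝ] E2 := Module.Basis.constr bb ℝ ![B - A, (1 - v) • (B - A) + v • (C - A)] with hL
  have hb0 : bb 0 = B - A := by rw [hbb]; rfl
  have hb1 : bb 1 = C - A := by rw [hbb]; rfl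
  have hLb0 : L (bb 0) = bb 0 := by rw [hL, Module.Basis.constr_basis]; rw [hb0]; rfl
  have hLb1 : L (bb 1) = (1 - v) • bb 0 + v • bb 1 := by
    rw [hL, Module.Basis.constr_basis, hb0, hb1]; rfl
  have hL0 : L (B - A) = B - A := by rw [← hb0, hLb0]
  have hL1 : L (C - A) = (1 - v) • (B - A) + v • (C - A) := by
    rw [← hb1, hLb1, hb0, hb1]
  have hdet : LinearMap.det L = v := by
    rw [← LinearMap.det_toMatrix bb L]
    have hm : LinearMap.toMatrix bb bb L = !![1, 1 - v; 0, v] := by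
      ext i j
      rw [LinearMap.toMatrix_apply]
      fin_cases j <;> fin_cases i <;>
        simp [hLb0, hLb1, map_add, _root_.map_smul, Module.Basis.repr_self, Finsupp.single_apply]
    rw [hm, Matrix.det_fin_two_of]
    ring
  -- affine map T x = A + L (x - A)
  set T : E2 →ᵃ[ℝ] E2 :=
    ((AffineEquiv.constVAdd ℝ E2 A).toAffineMap).comp
      ((LinearMap.toAffineMap L).comp ((AffineEquiv.constVAdd ℝ E2 (-A)).toAffineMap)) with hT
  have hTx : ∀ x, T x = A + L (-A + x) := fun x => rfl
  have hTA : T A = A := by rw [hTx]; simp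
  have hTB : T B = B := by
    rw [hTx]
    have h : -A + B = B - A := by abel
    rw [h, hL0]; abel
  have hTC : T C = (1 - v) • B + v • C := by
    rw [hTx]
    have h : -A + C = C - A := by abel
    rw [h, hL1]
    module
  have himg : convexHull ℝ ({A, B, (1 - v) • B + v • C} : Set E2)
      = ⇑T '' convexHull ℝ ({A, B, C} : Set E2) := by
    rw [AffineMap.image_convexHull]
    congr 1
    rw [Set.image_insert_eq, Set.image_insert_eq, Set.image_singleton, hTA, hTB, hTC]
  have htrans : ∀ (w : E2) (t : Set E2), volume ((fun x => w + x) '' t) = volume t := by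
    intro w t
    rw [Set.image_eq_preimage_of_inverse (g := fun x => -w + x)
      (fun x => by simp) (fun x => by simp)]
    exact measure_preimage_add _ _ _
  have hvol : volume (⇑T '' convexHull ℝ ({A, B, C} : Set E2))
      = ENNReal.ofReal v * volume (convexHull ℝ ({A, B, C} : Set E2)) := by
    have h1' : ⇑T '' convexHull ℝ ({A, B, C} : Set E2)
        = (fun x => A + x) '' (⇑L '' ((fun x => -A + x) '' convexHull ℝ ({A, B, C} : Set E2))) := by
      rw [← Set.image_comp, ← Set.image_comp]
      exact Set.image_congr fun x _ => hTx x
    rw [h1', htrans, Measure.addHaar_image_linearMap, hdet, htrans, abs_of_nonneg hv]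
  rw [triangleArea, triangleArea, himg, hvol, ENNReal.toReal_mul, ENNReal.toReal_ofReal hv]

/-- For a nondegenerate triangle `A B C` with `dist A B ≤ dist B C ≤ dist A C`, and a point
`D` on the segment `[B, C]` with `dist B D = dist A B`, both the circumradius and the
inradius of the triangle `A B D` are at most those of `A B C`. -/
theorem circumradius_inradius_isosceles_le (A B C D : EuclideanSpace ℝ (Fin 2))
    (hind : AffineIndependent ℝ ![A, B, C])
    (h1 : dist A B ≤ dist B C) (h2 : dist B C ≤ dist A C)
    (hD : D ∈ segment ℝ B C) (hBD : dist B D = dist A B) :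
    triangleCircumradius A B D ≤ triangleCircumradius A B C ∧
      triangleInradius A B D ≤ triangleInradius A B C := by
  obtain ⟨u, v, hu, hv, huv, hDeq⟩ := hD
  have hu' : u = 1 - v := by linarith
  subst hu'
  have hAB : A ≠ B := by
    have := hind.injective.ne (show (0 : Fin 3) ≠ 1 by decide)
    simpa using this
  have hBC : B ≠ C := by
    have := hind.injective.ne (show (1 : Fin 3) ≠ 2 by decide)
    simpa using this
  have hAC : A ≠ C := by
    have := hind.injective.ne (show (0 : Fin 3) ≠ 2 by decide)
    simpa using this
  have hc : 0 < dist A B := dist_pos.mpr hAB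
  have ha : 0 < dist B C := dist_pos.mpr hBC
  have hb : 0 < dist A C := dist_pos.mpr hAC
  have hS : 0 < triangleArea A B C := triangleArea_pos A B C hind
  have harea : triangleArea A B D = v * triangleArea A B C := by
    rw [← hDeq]; exact triangleArea_scale A B C hind v hv
  have hca : dist A B = v * dist B C := by
    rw [← hBD, ← hDeq, dist_eq_norm]
    have h : B - ((1 - v) • B + v • C) = v • (B - C) := by module
    rw [h, norm_smul, Real.norm_eq_abs, abs_of_nonneg hv, ← dist_eq_norm]
  have hv1 : v ≤ 1 := le_of_mul_le_mul_right (by rw [one_mul, ← hca]; exact h1) ha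
  have hvpos : 0 < v := by nlinarith [hca, hc, ha]
  have hd_le : dist A D ≤ dist A C := by
    rw [← hDeq, dist_eq_norm]
    have h : A - ((1 - v) • B + v • C) = (1 - v) • (A - B) + v • (A - C) := by module
    rw [h]
    calc ‖(1 - v) • (A - B) + v • (A - C)‖ ≤ ‖(1 - v) • (A - B)‖ + ‖v • (A - C)‖ :=
          norm_add_le _ _
      _ = (1 - v) * dist A B + v * dist A C := by
          rw [norm_smul, norm_smul, Real.norm_eq_abs, Real.norm_eq_abs,
            abs_of_nonneg hu, abs_of_nonneg hv, dist_eq_norm, dist_eq_norm]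
      _ ≤ dist A C := by nlinarith [h1.trans h2]
  have hDC : dist B D + dist D C = dist B C :=
    dist_add_dist_of_mem_segment ⟨1 - v, v, hu, hv, huv, hDeq⟩
  have hd_ge : dist A C ≤ dist A D + (dist B C - dist A B) := by
    have ht := dist_triangle A D C
    have hDC' : dist D C = dist B C - dist A B := by rw [← hDC, hBD]; ring
    linarith
  have htri : dist B C ≤ dist A B + dist A C := by
    have := dist_triangle B A C
    rwa [dist_comm B A] at this
  have hdn : (0 : ℝ) ≤ dist A D := dist_nonneg
  constructor
  · rw [triangleCircumradius, triangleCircumradius, harea, hBD, dist_comm D A, dist_comm C A,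
      hca]
    rw [div_le_div_iff₀ (by nlinarith [hvpos, hS]) (by nlinarith [hS])]
    nlinarith [mul_le_mul_of_nonneg_left hd_le
      (mul_nonneg (mul_nonneg (mul_nonneg (mul_nonneg
        (by norm_num : (0:ℝ) ≤ 4) hvpos.le) hvpos.le)
        (mul_nonneg ha.le ha.le)) hS.le), hS, hvpos, ha]
  · have key : v * (dist A B + dist B C + dist A C) ≤ 2 * dist A B + dist A D := by
      nlinarith [mul_le_mul_of_nonneg_right hv1
        (show (0:ℝ) ≤ dist A C + dist A B - dist B C by linarith), hca, hd_ge]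
    rw [triangleInradius, triangleInradius, harea, hBD, dist_comm D A, dist_comm C A]
    rw [div_le_div_iff₀ (by linarith) (by linarith)]
    nlinarith [mul_le_mul_of_nonneg_right key hS.le, hS]
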